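/- Let N be an orchard complete binary L-network containing a pair of parallel edges h_i, h_e (two edges with the same tail u and head v). Then u belongs to some unresolved root component T of N, and both h_i and h_e lie in the admissible edge set adm(T). -/

import Mathlib

open scoped Classical

noncomputable section

/-! ## Tags, μ-vectors, cherry types -/

inductive Tag : Type
  | te | hy | rn | ie
deriving DecidableEq, Inhabited

/-- The four cherry types (r2), (r3), (d), (u). -/
inductive CT : Type
  | r2 | r3 | d | u
deriving DecidableEq, Inhabited

/-- The eight cherry kinds: tree/reticulate combined with the four types. -/
inductive CherryKind : Type
  | Tr2 | Tr3 | Td | Tu | Rr2 | Rr3 | Rd | Ru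
deriving DecidableEq, Inhabited

def CherryKind.isTree : CherryKind → Bool
  | .Tr2 | .Tr3 | .Td | .Tu => true
  | _ => false

def CherryKind.ct : CherryKind → CT
  | .Tr2 => .r2 | .Tr3 => .r3 | .Td => .d | .Tu => .u
  | .Rr2 => .r2 | .Rr3 => .r3 | .Rd => .d | .Ru => .u

/-- A simple μ-vector on `n` taxa: coordinate 0 counts paths to hybrid nodes,
coordinate `i.succ` counts paths to the leaf labelled `i`. -/
abbrev MuVec (n : ℕ) := Fin (n + 1) → ℕ

/-- A μ-entry: a multiset of (one or two) tagged simple μ-vectors. -/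
abbrev MuEntry (n : ℕ) := Multiset (MuVec n × Tag)

/-- An edge-based μ-representation: a multiset of μ-entries. -/
abbrev MuRep (n : ℕ) := Multiset (MuEntry n)

/-- Indicator μ-vector `δ_S`. -/
def dlt {n : ℕ} (s : Finset (Fin (n + 1))) : MuVec n := fun i => if i ∈ s then 1 else 0

/-! ## Semidirected multigraphs with labelled leaves -/

/-- A semidirected multigraph on vertex names `ℕ` and edge names `ℕ`;
`dir e = true` means `e` is directed from `tail e` to `head e`;
`dir e = false` means `e` is an undirected edge with endpoints `tail e`, `head e`.
Leaves may be labelled by taxa in `Fin n`. -/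
structure Net (n : ℕ) where
  V : Finset ℕ
  E : Finset ℕ
  tail : ℕ → ℕ
  head : ℕ → ℕ
  dir : ℕ → Bool
  lbl : ℕ → Option (Fin n)

namespace Net

variable {n : ℕ}

def indeg (N : Net n) (v : ℕ) : ℕ :=
  (N.E.filter (fun e => N.dir e = true ∧ N.head e = v)).card
def outdeg (N : Net n) (v : ℕ) : ℕ :=
  (N.E.filter (fun e => N.dir e = true ∧ N.tail e = v)).card
def undeg (N : Net n) (v : ℕ) : ℕ :=
  (N.E.filter (fun e => N.dir e = false ∧ (N.tail e = v ∨ N.head e = v))).card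
def deg (N : Net n) (v : ℕ) : ℕ := N.indeg v + N.outdeg v + N.undeg v

def IsRootNode (N : Net n) (v : ℕ) : Prop := v ∈ N.V ∧ N.indeg v = 0 ∧ N.undeg v = 0
def IsLeafNode (N : Net n) (v : ℕ) : Prop := v ∈ N.V ∧ N.outdeg v = 0 ∧ N.undeg v = 0
def IsHybrid (N : Net n) (v : ℕ) : Prop := 2 ≤ N.indeg v
def IsTreeNode (N : Net n) (v : ℕ) : Prop := N.indeg v ≤ 1

/-- Source of a step `(e, forward?)` of a semidirected walk. -/
def src (N : Net n) (s : ℕ × Bool) : ℕ := if s.2 then N.tail s.1 else N.head s.1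
/-- Destination of a step. -/
def dst (N : Net n) (s : ℕ × Bool) : ℕ := if s.2 then N.head s.1 else N.tail s.1

/-- A step is legal from `u`: the edge is in the graph, directed edges are
traversed forwards, and the step starts at `u`. -/
def stepOK (N : Net n) (u : ℕ) (s : ℕ × Bool) : Prop :=
  s.1 ∈ N.E ∧ (N.dir s.1 = true → s.2 = true) ∧ N.src s = u

/-- `chain N u p x`: `p` is a semidirected walk from `u` to `x`. -/
def chain (N : Net n) : ℕ → List (ℕ × Bool) → ℕ → Prop
  | u, [], x => u = x
  | u, s :: p, x => N.stepOK u s ∧ N.chain (N.dst s) p x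

/-- A semidirected path (walk without repeated vertices) from `u` to `x`. -/
def IsPath (N : Net n) (u x : ℕ) (p : List (ℕ × Bool)) : Prop :=
  u ∈ N.V ∧ N.chain u p x ∧ (u :: p.map N.dst).Nodup

def paths (N : Net n) (u x : ℕ) : Set (List (ℕ × Bool)) := {p | N.IsPath u x p}
def pathsAvoid (N : Net n) (u x : ℕ) (e : ℕ) : Set (List (ℕ × Bool)) :=
  {p | N.IsPath u x p ∧ e ∉ p.map Prod.fst}

/-- `m N u x` : the number of semidirected paths from `u` to `x`. -/
def m (N : Net n) (u x : ℕ) : ℕ := (N.paths u x).ncard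
/-- `mAvoid N u x e` : the number of semidirected paths from `u` to `x` avoiding `e`. -/
def mAvoid (N : Net n) (u x : ℕ) (e : ℕ) : ℕ := (N.pathsAvoid u x e).ncard

/-- One undirected edge joins `u` and `v`. -/
def ustep (N : Net n) (u v : ℕ) : Prop :=
  ∃ e ∈ N.E, N.dir e = false ∧
    ((N.tail e = u ∧ N.head e = v) ∨ (N.tail e = v ∧ N.head e = u))

/-- `u ~ v`: joined by a path consisting solely of undirected edges. -/
def UndirConn (N : Net n) : ℕ → ℕ → Prop := Relation.ReflTransGen N.ustep

/-- A semidirected cycle. -/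
def IsSDCycle (N : Net n) (p : List (ℕ × Bool)) : Prop :=
  ∃ u, p ≠ [] ∧ N.chain u p u ∧ (p.map N.dst).Nodup ∧ (p.map Prod.fst).Nodup

def Acyclic (N : Net n) : Prop := ∀ p, ¬ N.IsSDCycle p

/-- `x` is the leaf labelled `a`. -/
def HasLeaf (N : Net n) (a : Fin n) (x : ℕ) : Prop := x ∈ N.V ∧ N.lbl x = some a

/-- `N` is an `L`-network: a semidirected acyclic graph whose leaves are tree
nodes, with leaves injectively labelled. -/
structure IsLNetwork (N : Net n) : Prop where
  wfT : ∀ e ∈ N.E, N.tail e ∈ N.V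
  wfH : ∀ e ∈ N.E, N.head e ∈ N.V
  acyclic : N.Acyclic
  leavesTree : ∀ v, N.IsLeafNode v → N.IsTreeNode v
  lblV : ∀ v, v ∉ N.V → N.lbl v = none
  lblLeaf : ∀ v ∈ N.V, ((N.lbl v).isSome ↔ N.IsLeafNode v)
  lblInj : ∀ v ∈ N.V, ∀ w ∈ N.V, N.lbl v ≠ none → N.lbl v = N.lbl w → v = w

/-- Binary: roots of degree 0, 2 or 3; leaves of degree 0 or 1; other nodes of degree 3. -/
def IsBinary (N : Net n) : Prop :=
  ∀ v ∈ N.V,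
    (N.IsRootNode v → N.deg v = 0 ∨ N.deg v = 2 ∨ N.deg v = 3) ∧
    (N.IsLeafNode v → N.deg v = 0 ∨ N.deg v = 1) ∧
    (¬ N.IsRootNode v → ¬ N.IsLeafNode v → N.deg v = 3)

/-- The class of `v` under `~` is a singleton. -/
def TrivialClass (N : Net n) (v : ℕ) : Prop := ∀ w, N.UndirConn v w → w = v

/-- Complete: edges incident to leaves are directed (toward the leaves), and every
nontrivial class under `~` has in-degree 0 in the contraction `N/~`. -/
def IsComplete (N : Net n) : Prop :=
  (∀ e ∈ N.E, N.dir e = false → ¬ N.IsLeafNode (N.tail e) ∧ ¬ N.IsLeafNode (N.head e)) ∧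
  (∀ v ∈ N.V, ¬ N.TrivialClass v → ∀ e ∈ N.E, N.dir e = true → ¬ N.UndirConn (N.head e) v)

/-- The class `[v]` is a root of the contraction `N/~`: no directed edge points into it. -/
def IsRootClass (N : Net n) (v : ℕ) : Prop :=
  v ∈ N.V ∧ ∀ e ∈ N.E, N.dir e = true → ¬ N.UndirConn (N.head e) v

/-- `v` belongs to an unresolved root component. -/
def UnresolvedRC (N : Net n) (v : ℕ) : Prop :=
  N.IsRootClass v ∧ (¬ N.TrivialClass v ∨ N.deg v = 3)

/-- `e` belongs to the admissible edge set of the root component of `v0`. -/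
def AdmFor (N : Net n) (v0 e : ℕ) : Prop := e ∈ N.E ∧ N.UndirConn (N.tail e) v0

/-! ## μ-representation of a network -/

def Hybs (N : Net n) : Finset ℕ := N.V.filter (fun v => N.IsHybrid v)

def mToLbl (N : Net n) (v : ℕ) (a : Fin n) : ℕ :=
  ∑ x ∈ N.V.filter (fun x => N.lbl x = some a), N.m v x
def mToLblAvoid (N : Net n) (v : ℕ) (a : Fin n) (e : ℕ) : ℕ :=
  ∑ x ∈ N.V.filter (fun x => N.lbl x = some a), N.mAvoid v x e

/-- Numbers of paths from `v` to hybrids (coordinate 0) and to each leaf. -/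
def muFrom (N : Net n) (v : ℕ) : MuVec n :=
  fun i => Fin.cases (∑ h ∈ N.Hybs, N.m v h) (fun a => N.mToLbl v a) i

/-- Numbers of paths from `v` avoiding edge `e`. -/
def muAt (N : Net n) (e : ℕ) (v : ℕ) : MuVec n :=
  fun i => Fin.cases (∑ h ∈ N.Hybs, N.mAvoid v h e) (fun a => N.mToLblAvoid v a e) i

/-- The μ-entry of an edge. -/
def muEntryEdge (N : Net n) (e : ℕ) : MuEntry n :=
  if N.dir e = true then
    let t : Tag := if N.IsHybrid (N.head e) then Tag.hy else Tag.te
    if N.UnresolvedRC (N.tail e) then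
      ({(N.muAt e (N.head e), t),
        (fun i => N.muFrom (N.tail e) i - N.muAt e (N.tail e) i, Tag.ie)} : MuEntry n)
    else ({(N.muAt e (N.head e), t)} : MuEntry n)
  else
    ({(N.muAt e (N.head e), Tag.te), (N.muAt e (N.tail e), Tag.te)} : MuEntry n)

/-- One μ-entry per root component (indexed by the minimal representative). -/
def rootEntries (N : Net n) : MuRep n :=
  ((N.V.filter (fun v => N.IsRootClass v ∧ ∀ w ∈ N.V, N.UndirConn v w → v ≤ w)).val).map
    (fun v => ({(N.muFrom v, Tag.rn)} : MuEntry n))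

/-- The edge-based μ-representation of `N`. -/
def muRep (N : Net n) : MuRep n :=
  N.E.val.map (fun e => N.muEntryEdge e) + N.rootEntries

end Net

/-! ## Operations on μ-representations -/

variable {n : ℕ}

/-- Multiplicity of a simple μ-vector in a μ-representation: the number of
entries (with multiplicity) containing it. -/
def multVec (μs : MuRep n) (m : MuVec n) : ℕ :=
  μs.countP (fun ent => ∃ t, (m, t) ∈ ent)

def hasTagged (μs : MuRep n) (mt : MuVec n × Tag) : Prop := ∃ ent ∈ μs, mt ∈ ent

/-- The entry of a simple μ-vector (meaningful when its multiplicity is 1). -/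
def entryOf (μs : MuRep n) (m : MuVec n) : MuEntry n :=
  if h : ∃ ent ∈ μs, ∃ t, (m, t) ∈ ent then h.choose else 0

/-- The tag of a simple μ-vector (meaningful when its multiplicity is 1). -/
def tagOf (μs : MuRep n) (m : MuVec n) : Tag :=
  if hasTagged μs (m, Tag.rn) then Tag.rn
  else if hasTagged μs (m, Tag.ie) then Tag.ie
  else if hasTagged μs (m, Tag.te) then Tag.te
  else Tag.hy

/-- The tagged μ-vectors other than `m` in the entry of `m`. -/
def invParts (μs : MuRep n) (m : MuVec n) : MuEntry n :=
  (entryOf μs m).filter (fun mt => mt.1 ≠ m)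

def hasInv (μs : MuRep n) (m : MuVec n) : Prop := invParts μs m ≠ 0

/-- The inverse `m⁻¹` of `m` (meaningful when it exists). -/
def invVec (μs : MuRep n) (m : MuVec n) : MuVec n := ((invParts μs m).toList.headI).1

/-- `(a,b)` is a tree cherry of the μ-representation. -/
def MuTreeCherry (μs : MuRep n) (a b : Fin n) : Prop :=
  multVec μs (dlt ({a.succ, b.succ} : Finset (Fin (n + 1)))) = 1

/-- Type of a tree cherry of a μ-representation. -/
def muTreeType (μs : MuRep n) (a b : Fin n) : CT :=
  let mab := dlt ({a.succ, b.succ} : Finset (Fin (n + 1)))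
  match tagOf μs mab with
  | Tag.rn => CT.r2
  | Tag.ie => CT.r3
  | Tag.te =>
      if (¬ hasInv μs mab) ∨ (∃ mt ∈ invParts μs mab, mt.2 = Tag.ie) then CT.d else CT.u
  | Tag.hy => CT.u

/-- `(a,b)` is a reticulate cherry of the μ-representation. -/
def MuRetCherry (μs : MuRep n) (a b : Fin n) : Prop :=
  multVec μs (dlt ({0, a.succ} : Finset (Fin (n + 1)))) = 2 ∧
    (multVec μs (dlt ({0, a.succ, b.succ} : Finset (Fin (n + 1)))) = 1 ∨
      (multVec μs (dlt ({0, a.succ, b.succ} : Finset (Fin (n + 1)))) = 2 ∧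
        ∀ ent ∈ μs, ∀ t : Tag,
          (dlt ({0, a.succ, b.succ} : Finset (Fin (n + 1))), t) ∈ ent → t = Tag.ie))

/-- Type of a reticulate cherry of a μ-representation. -/
def muRetType (μs : MuRep n) (a b : Fin n) : CT :=
  let mab := dlt ({0, a.succ, b.succ} : Finset (Fin (n + 1)))
  if multVec μs mab = 2 then CT.r3
  else
    match tagOf μs mab with
    | Tag.rn => CT.r2
    | Tag.ie => CT.r3
    | Tag.te =>
        if (¬ hasInv μs mab) ∨ (∃ mt ∈ invParts μs mab, mt.2 = Tag.ie) then CT.d else CT.u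
    | Tag.hy => CT.u

/-- `δ_{0,a,b}⁻¹`, defined as `δ_{0,a}` in the multiplicity-2 (parallel) case. -/
def retInv (μs : MuRep n) (a b : Fin n) : MuVec n :=
  if multVec μs (dlt ({0, a.succ, b.succ} : Finset (Fin (n + 1)))) = 2 then
    dlt ({0, a.succ} : Finset (Fin (n + 1)))
  else invVec μs (dlt ({0, a.succ, b.succ} : Finset (Fin (n + 1))))

/-- The internal μ-entry of a reticulate cherry `(a,b)` with respect to `μs`. -/
def internalEntry (μs : MuRep n) (a b : Fin n) : MuEntry n :=
  let d0a := dlt ({0, a.succ} : Finset (Fin (n + 1)))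
  let d0ab := dlt ({0, a.succ, b.succ} : Finset (Fin (n + 1)))
  if multVec μs d0ab = 1 ∧
      ((¬ hasInv μs d0ab) ∨ (∃ mt ∈ invParts μs d0ab, mt.2 = Tag.ie)) then
    ({(d0a, Tag.hy)} : MuEntry n)
  else
    ({(d0a, Tag.hy), (fun i => d0ab i + retInv μs a b i - d0a i, Tag.ie)} : MuEntry n)

/-- Remove the whole entry of `m`. -/
def removeEntryOf (μs : MuRep n) (m : MuVec n) : MuRep n := μs.erase (entryOf μs m)

/-- Remove `m⁻¹` from the entry of `m` (keeping `m`). -/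
def removeInvOf (μs : MuRep n) (m : MuVec n) : MuRep n :=
  (μs.erase (entryOf μs m)) + {(entryOf μs m).filter (fun mt => mt.1 = m)}

/-- Remove `m` from its entry (keeping the rest of the entry). -/
def removeVecOf (μs : MuRep n) (m : MuVec n) : MuRep n :=
  (μs.erase (entryOf μs m)) + {(entryOf μs m).filter (fun mt => mt.1 ≠ m)}

def entryOfT (μs : MuRep n) (mt : MuVec n × Tag) : MuEntry n :=
  if h : ∃ ent ∈ μs, mt ∈ ent then h.choose else 0

/-- Remove one occurrence of the tagged μ-vector `mt` from some entry containing it. -/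
def removeTaggedOnce (μs : MuRep n) (mt : MuVec n × Tag) : MuRep n :=
  (μs.erase (entryOfT μs mt)) + {(entryOfT μs mt).erase mt}

/-- Change the tag of `m⁻¹` (within the entry of `m`) to `ie`. -/
def retagInvIe (μs : MuRep n) (m : MuVec n) : MuRep n :=
  let ent := entryOf μs m
  (μs.erase ent) +
    {ent.filter (fun mt => mt.1 = m) + (invParts μs m).map (fun mt => (mt.1, Tag.ie))}

/-- Change the tag of one occurrence of the tagged μ-vector `mt` to `t'`. -/
def retagTaggedTo (μs : MuRep n) (mt : MuVec n × Tag) (t' : Tag) : MuRep n :=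
  let ent := entryOfT μs mt
  (μs.erase ent) + {(ent.erase mt) + ({(mt.1, t')} : MuEntry n)}

/-- Apply `f` to every simple μ-vector of every entry. -/
def mapVecs (f : MuVec n → MuVec n) (μs : MuRep n) : MuRep n :=
  μs.map (fun ent => ent.map (fun mt => (f mt.1, mt.2)))

/-- `(m_0, m_a, m_b, …) ↦ (m_0, 0, m_b, …)`. -/
def zeroCoordA (a : Fin n) (m : MuVec n) : MuVec n :=
  fun i => if i = a.succ then 0 else m i

/-- `(m_0, m_a, m_b, …) ↦ (m_0 − m_a, m_a − m_b, m_b, …)`. -/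
def retAdj (a b : Fin n) (m : MuVec n) : MuVec n :=
  fun i => if i = 0 then m 0 - m a.succ else if i = a.succ then m a.succ - m b.succ else m i

/-- Reduction of a tree cherry `(a,b)` on a μ-representation. -/
def muReduceTree (μs : MuRep n) (a b : Fin n) : MuRep n :=
  let dab := dlt ({a.succ, b.succ} : Finset (Fin (n + 1)))
  let da := dlt ({a.succ} : Finset (Fin (n + 1)))
  let db := dlt ({b.succ} : Finset (Fin (n + 1)))
  let μ1 :=
    match muTreeType μs a b with
    | CT.r2 => removeEntryOf μs db
    | CT.d => removeEntryOf μs db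
    | CT.r3 => removeVecOf (removeInvOf μs db) dab
    | CT.u => retagInvIe (removeEntryOf μs db) dab
  let μ2 := removeEntryOf μ1 da
  mapVecs (zeroCoordA a) μ2

/-- Reduction of a reticulate cherry `(a,b)` on a μ-representation. -/
def muReduceRet (μs : MuRep n) (a b : Fin n) : MuRep n :=
  let d0a := dlt ({0, a.succ} : Finset (Fin (n + 1)))
  let d0ab := dlt ({0, a.succ, b.succ} : Finset (Fin (n + 1)))
  let da := dlt ({a.succ} : Finset (Fin (n + 1)))
  let db := dlt ({b.succ} : Finset (Fin (n + 1)))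
  let intEnt := internalEntry μs a b
  let μ1 :=
    match muRetType μs a b with
    | CT.r2 => removeEntryOf μs db
    | CT.d => removeEntryOf μs db
    | CT.r3 => removeTaggedOnce (removeInvOf μs db) (d0ab, Tag.ie)
    | CT.u => retagInvIe (removeEntryOf μs db) d0ab
  let μ2 := removeEntryOf μ1 da
  let μ3 := μ2.erase intEnt
  let μ4 := retagTaggedTo μ3 (d0a, Tag.hy) Tag.te
  mapVecs (retAdj a b) μ4

/-- Reduction of a cherry `(a,b)` on a μ-representation. -/
def muReduceCherry (μs : MuRep n) (a b : Fin n) : MuRep n :=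
  if MuTreeCherry μs a b then muReduceTree μs a b
  else if MuRetCherry μs a b then muReduceRet μs a b
  else μs

/-! ## Cherries and reductions on networks -/

namespace Net

/-- The node labelled `a` (meaningful when it exists). -/
def labelNode (N : Net n) (a : Fin n) : ℕ :=
  ((N.V.filter (fun x => N.lbl x = some a)).sort (· ≤ ·)).headI

def inEdges (N : Net n) (x : ℕ) : Finset ℕ :=
  N.E.filter (fun e => N.dir e = true ∧ N.head e = x)

/-- The parent of `x` (meaningful when `x` has in-degree 1). -/
def parentOf (N : Net n) (x : ℕ) : ℕ :=
  N.tail (((N.inEdges x).sort (· ≤ ·)).headI)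

def IsParentOf (N : Net n) (p x : ℕ) : Prop :=
  ∃ e ∈ N.E, N.dir e = true ∧ N.tail e = p ∧ N.head e = x

/-- `(a,b)` is a tree cherry of `N`. -/
def TreeCherry (N : Net n) (a b : Fin n) : Prop :=
  ∃ x y p, N.HasLeaf a x ∧ N.HasLeaf b y ∧ x ≠ y ∧ N.IsParentOf p x ∧ N.IsParentOf p y

/-- `(a,b)` is a reticulate cherry of `N`. -/
def RetCherry (N : Net n) (a b : Fin n) : Prop :=
  ∃ x y pa pb, N.HasLeaf a x ∧ N.HasLeaf b y ∧ x ≠ y ∧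
    N.IsParentOf pa x ∧ N.IsHybrid pa ∧ N.IsParentOf pb y ∧ N.IsParentOf pb pa

def IsCherry (N : Net n) (a b : Fin n) : Prop := N.TreeCherry a b ∨ N.RetCherry a b

/-- The type of a cherry `(a,b)`, read off from the parent of `b`. -/
def cherryType (N : Net n) (a b : Fin n) : CT :=
  let pb := N.parentOf (N.labelNode b)
  if N.IsRootNode pb ∧ N.deg pb = 2 then CT.r2
  else if N.IsRootNode pb ∧ N.deg pb = 3 then CT.r3
  else if 0 < N.undeg pb then CT.u
  else CT.d

def incE (N : Net n) (v : ℕ) : Finset ℕ :=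
  N.E.filter (fun e => N.tail e = v ∨ N.head e = v)

/-- A node is suppressible (Def. of node suppression). -/
def Suppressible (N : Net n) (v : ℕ) : Prop :=
  N.lbl v = none ∧
    ((N.deg v = 2 ∧ ¬ N.IsRootNode v) ∨
      (N.deg v = 1 ∧ N.IsRootNode v ∧ ∀ e ∈ N.incE v, ¬ N.IsHybrid (N.head e)))

/-- Replace the two edges `e1`, `e2` at `v` by the single edge (named `e1`)
from `p` to `c`, directed iff `d`. -/
def replaceEdge (N : Net n) (v e1 e2 p c : ℕ) (d : Bool) : Net n :=
  { V := N.V.erase v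
    E := N.E.erase e2
    tail := Function.update N.tail e1 p
    head := Function.update N.head e1 c
    dir := Function.update N.dir e1 d
    lbl := N.lbl }

/-- Suppress a (suppressible) node of degree 1 or 2. -/
def suppress (N : Net n) (v : ℕ) : Net n :=
  match (N.incE v).sort (· ≤ ·) with
  | [e] => { N with V := N.V.erase v, E := N.E.erase e }
  | [e1, e2] =>
      let o1 := if N.tail e1 = v then N.head e1 else N.tail e1
      let o2 := if N.tail e2 = v then N.head e2 else N.tail e2
      if N.dir e1 = true ∧ N.tail e1 = v then N.replaceEdge v e1 e2 o2 o1 true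
      else if N.dir e2 = true ∧ N.tail e2 = v then N.replaceEdge v e1 e2 o1 o2 true
      else if N.dir e1 = true then N.replaceEdge v e1 e2 o1 o2 true
      else if N.dir e2 = true then N.replaceEdge v e1 e2 o2 o1 true
      else N.replaceEdge v e1 e2 o1 o2 false
  | _ => N

def suppressIf (N : Net n) (v : ℕ) : Net n := if N.Suppressible v then N.suppress v else N

/-- Delete the leaf `x` and its incident edge(s). -/
def deleteLeaf (N : Net n) (x : ℕ) : Net n :=
  { V := N.V.erase x
    E := N.E \ N.incE x
    tail := N.tail
    head := N.head
    dir := N.dir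
    lbl := Function.update N.lbl x none }

/-- Reduction of a tree cherry `(a,b)`. -/
def reduceTree (N : Net n) (a b : Fin n) : Net n :=
  let x := N.labelNode a
  let p := N.parentOf x
  (N.deleteLeaf x).suppressIf p

/-- Reduction of a reticulate cherry `(a,b)`: delete the internal hybrid edge,
suppress `p_b` if suppressible, then suppress `p_a`. -/
def reduceRet (N : Net n) (a b : Fin n) : Net n :=
  let x := N.labelNode a
  let y := N.labelNode b
  let pa := N.parentOf x
  let pb := N.parentOf y
  let eint :=
    ((N.E.filter (fun e => N.dir e = true ∧ N.tail e = pb ∧ N.head e = pa)).sort (· ≤ ·)).headI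
  let N1 : Net n := { N with E := N.E.erase eint }
  ((N1.suppressIf pb).suppress pa)

/-- Reduction of the cherry `(a,b)` in `N`, written `N^{(a,b)}`. -/
def reduceCherry (N : Net n) (a b : Fin n) : Net n :=
  if N.TreeCherry a b then N.reduceTree a b
  else if N.RetCherry a b then N.reduceRet a b
  else N

def reduceSeq (N : Net n) (S : List (Fin n × Fin n)) : Net n :=
  S.foldl (fun M s => M.reduceCherry s.1 s.2) N

def IsRedSeq : Net n → List (Fin n × Fin n) → Prop
  | _, [] => True
  | N, s :: S => N.IsCherry s.1 s.2 ∧ IsRedSeq (N.reduceCherry s.1 s.2) S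

/-- `N` is the trivial forest on `L0`: isolated nodes labelled bijectively by `L0`. -/
def IsTrivialForest (N : Net n) (L0 : Finset (Fin n)) : Prop :=
  N.E = ∅ ∧ (∀ v ∈ N.V, ∃ a ∈ L0, N.lbl v = some a) ∧
    (∀ a ∈ L0, ∃ v ∈ N.V, N.lbl v = some a)

/-- `N` is orchard: some cherry reduction sequence reduces it to a trivial forest. -/
def Orchard (N : Net n) : Prop :=
  ∃ S L0, N.IsRedSeq S ∧ (N.reduceSeq S).IsTrivialForest L0

def freshV (N : Net n) : ℕ := N.V.sup id + 1
def freshE (N : Net n) : ℕ := N.E.sup id + 1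

/-- Addition of the cherry `(a,b)` of kind `k` to `N` (identity if conditions fail). -/
def addCherry (N : Net n) (a b : Fin n) (k : CherryKind) : Net n :=
  let y := N.labelNode b
  let w := N.parentOf y
  let ewb := ((N.inEdges y).sort (· ≤ ·)).headI
  let va := N.freshV
  let vpb := N.freshV + 1
  let e1 := N.freshE
  let e2 := N.freshE + 1
  let x := N.labelNode a
  let pa := N.parentOf x
  let isolated : Prop := y ∈ N.V ∧ N.deg y = 0 ∧ (N.lbl y).isSome
  let nonIsolated : Prop := y ∈ N.V ∧ N.deg y ≠ 0 ∧ (N.lbl y).isSome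
  let resolvedRoot : Prop := N.IsRootNode w ∧ N.deg w = 2
  let aLeaf : Prop := ∃ xx, N.HasLeaf a xx
  match k with
  | CherryKind.Tr2 =>
      if isolated then
        { V := insert vpb (insert va N.V)
          E := insert e2 (insert e1 N.E)
          tail := Function.update (Function.update N.tail e1 vpb) e2 vpb
          head := Function.update (Function.update N.head e1 va) e2 y
          dir := Function.update (Function.update N.dir e1 true) e2 true
          lbl := Function.update N.lbl va (some a) }
      else N
  | CherryKind.Tr3 =>
      if nonIsolated ∧ resolvedRoot then
        { V := insert va N.V
          E := insert e1 N.E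
          tail := Function.update N.tail e1 w
          head := Function.update N.head e1 va
          dir := Function.update N.dir e1 true
          lbl := Function.update N.lbl va (some a) }
      else N
  | CherryKind.Td =>
      if nonIsolated ∧ ¬ resolvedRoot then
        { V := insert vpb (insert va N.V)
          E := insert e2 (insert e1 N.E)
          tail := Function.update (Function.update N.tail e1 vpb) e2 vpb
          head :=
            Function.update (Function.update (Function.update N.head ewb vpb) e1 va) e2 y
          dir := Function.update (Function.update N.dir e1 true) e2 true
          lbl := Function.update N.lbl va (some a) }
      else N
  | CherryKind.Tu =>
      if nonIsolated ∧ ¬ resolvedRoot then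
        { V := insert vpb (insert va N.V)
          E := insert e2 (insert e1 N.E)
          tail := Function.update (Function.update N.tail e1 vpb) e2 vpb
          head :=
            Function.update (Function.update (Function.update N.head ewb vpb) e1 va) e2 y
          dir :=
            Function.update (Function.update (Function.update N.dir ewb false) e1 true) e2 true
          lbl := Function.update N.lbl va (some a) }
      else N
  | CherryKind.Rr2 =>
      if aLeaf ∧ isolated then
        { V := insert vpb N.V
          E := insert e2 (insert e1 N.E)
          tail := Function.update (Function.update N.tail e1 vpb) e2 vpb
          head := Function.update (Function.update N.head e1 pa) e2 y
          dir := Function.update (Function.update N.dir e1 true) e2 true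
          lbl := N.lbl }
      else N
  | CherryKind.Rr3 =>
      if aLeaf ∧ nonIsolated ∧ resolvedRoot then
        { V := N.V
          E := insert e1 N.E
          tail := Function.update N.tail e1 w
          head := Function.update N.head e1 pa
          dir := Function.update N.dir e1 true
          lbl := N.lbl }
      else N
  | CherryKind.Rd =>
      if aLeaf ∧ nonIsolated ∧ ¬ resolvedRoot then
        { V := insert vpb N.V
          E := insert e2 (insert e1 N.E)
          tail := Function.update (Function.update N.tail e1 vpb) e2 vpb
          head :=
            Function.update (Function.update (Function.update N.head ewb vpb) e1 pa) e2 y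
          dir := Function.update (Function.update N.dir e1 true) e2 true
          lbl := N.lbl }
      else N
  | CherryKind.Ru =>
      if aLeaf ∧ nonIsolated ∧ ¬ resolvedRoot then
        { V := insert vpb N.V
          E := insert e2 (insert e1 N.E)
          tail := Function.update (Function.update N.tail e1 vpb) e2 vpb
          head :=
            Function.update (Function.update (Function.update N.head ewb vpb) e1 pa) e2 y
          dir :=
            Function.update (Function.update (Function.update N.dir ewb false) e1 true) e2 true
          lbl := N.lbl }
      else N

/-- Isomorphism of leaf-labelled semidirected networks. -/
def Isom (N M : Net n) : Prop :=
  ∃ f g : ℕ → ℕ,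
    Set.InjOn f ↑N.V ∧ N.V.image f = M.V ∧
    Set.InjOn g ↑N.E ∧ N.E.image g = M.E ∧
    (∀ e ∈ N.E, M.dir (g e) = N.dir e) ∧
    (∀ e ∈ N.E, N.dir e = true →
      M.tail (g e) = f (N.tail e) ∧ M.head (g e) = f (N.head e)) ∧
    (∀ e ∈ N.E, N.dir e = false →
      (M.tail (g e) = f (N.tail e) ∧ M.head (g e) = f (N.head e)) ∨
        (M.tail (g e) = f (N.head e) ∧ M.head (g e) = f (N.tail e))) ∧
    (∀ v ∈ N.V, M.lbl (f v) = N.lbl v)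

/-- `N` is a (complete binary) `L`-network. -/
def Good (N : Net n) : Prop := N.IsLNetwork ∧ N.IsBinary ∧ N.IsComplete

/-- The edge-based μ-dissimilarity: size of the symmetric difference of the
multisets of μ-entries. -/
def dmu (N M : Net n) : ℕ := ((N.muRep - M.muRep) + (M.muRep - N.muRep)).card

/-- `(a,b)` is a reticulate cherry of `N` whose internal and external hybrid
edges are parallel. -/
def ParallelRet (N : Net n) (a b : Fin n) : Prop :=
  ∃ x y pa pb hi he, N.HasLeaf a x ∧ N.HasLeaf b y ∧
    N.IsParentOf pa x ∧ N.IsHybrid pa ∧ N.IsParentOf pb y ∧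
    hi ≠ he ∧ hi ∈ N.E ∧ he ∈ N.E ∧ N.dir hi = true ∧ N.dir he = true ∧
    N.tail hi = pb ∧ N.head hi = pa ∧ N.tail he = pb ∧ N.head he = pa

end Net


namespace StmtNine

open Net

/-- The invariant preserved by cherry reductions: a "stuck" pair of parallel
directed edges `hi, he : u ⟶ v`, together with enough local well-formedness. -/
structure Inv {n : ℕ} (N : Net n) (u v hi he : ℕ) : Prop where
  hne : hi ≠ he
  hiE : hi ∈ N.E
  heE : he ∈ N.E
  dhi : N.dir hi = true
  dhe : N.dir he = true
  thi : N.tail hi = u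
  hhi : N.head hi = v
  the : N.tail he = u
  hhe : N.head he = v
  uv : u ≠ v
  lu : N.lbl u = none
  lv : N.lbl v = none
  outU : ∀ e ∈ N.E, N.dir e = true → N.tail e = u → N.head e = v
  inV : ∀ e ∈ N.E, N.dir e = true → N.head e = v → N.tail e = u
  noUU : ∀ e ∈ N.E, N.dir e = false →
    N.tail e ≠ u ∧ N.head e ≠ u ∧ N.tail e ≠ v ∧ N.head e ≠ v
  inj : ∀ x y, N.lbl x ≠ none → N.lbl x = N.lbl y → x = y
  lleafT : ∀ e ∈ N.E, N.lbl (N.tail e) = none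
  lleafU : ∀ e ∈ N.E, N.dir e = false → N.lbl (N.head e) = none
  lin1 : ∀ x, N.lbl x ≠ none →
    (N.E.filter (fun e => N.dir e = true ∧ N.head e = x)).card ≤ 1
  wfT : ∀ e ∈ N.E, N.tail e ∈ N.V
  wfH : ∀ e ∈ N.E, N.head e ∈ N.V
  noLoop : ∀ e ∈ N.E, N.tail e ≠ N.head e

variable {n : ℕ}

lemma mem_incE {N : Net n} {w e : ℕ} :
    e ∈ N.incE w ↔ e ∈ N.E ∧ (N.tail e = w ∨ N.head e = w) := by
  simp [Net.incE]

lemma indeg_ne_zero {N : Net n} {w g : ℕ} (hg : g ∈ N.E) (hd : N.dir g = true)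
    (hh : N.head g = w) : N.indeg w ≠ 0 := by
  have hm : g ∈ N.E.filter (fun e => N.dir e = true ∧ N.head e = w) :=
    Finset.mem_filter.mpr ⟨hg, hd, hh⟩
  exact Finset.card_ne_zero_of_mem hm

lemma labelNode_eq {N : Net n} {u v hi he : ℕ} (I : Inv N u v hi he)
    {a : Fin n} {x : ℕ} (hx : N.HasLeaf a x) : N.labelNode a = x := by
  have hfil : N.V.filter (fun z => N.lbl z = some a) = {x} := by
    ext z
    simp only [Finset.mem_filter, Finset.mem_singleton]
    constructor
    · rintro ⟨hzV, hz⟩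
      exact (I.inj x z (by rw [hx.2]; simp) (by rw [hx.2, hz])).symm
    · rintro rfl; exact ⟨hx.1, hx.2⟩
  rw [Net.labelNode, hfil, Finset.sort_singleton]
  rfl

lemma parentOf_eq {N : Net n} {u v hi he : ℕ} (I : Inv N u v hi he)
    {p x e0 : ℕ} (hx : N.lbl x ≠ none) (he0 : e0 ∈ N.E) (hd : N.dir e0 = true)
    (ht : N.tail e0 = p) (hh : N.head e0 = x) : N.parentOf x = p := by
  have hmem : e0 ∈ N.inEdges x := by
    simp only [Net.inEdges, Finset.mem_filter]; exact ⟨he0, hd, hh⟩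
  have hfil : N.inEdges x = {e0} := by
    apply Finset.eq_singleton_iff_unique_mem.mpr
    refine ⟨hmem, fun z hz => ?_⟩
    exact Finset.card_le_one.mp (I.lin1 x hx) z hz e0 hmem
  rw [Net.parentOf, hfil, Finset.sort_singleton]
  simpa using ht

lemma Inv.eraseEdge {N : Net n} {u v hi he e0 : ℕ} (I : Inv N u v hi he)
    (h0 : N.tail e0 ≠ u) : Inv { N with E := N.E.erase e0 } u v hi he := by
  have hhi : hi ≠ e0 := fun h => h0 (by rw [← h, I.thi])
  have hhe : he ≠ e0 := fun h => h0 (by rw [← h, I.the])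
  exact
    { hne := I.hne
      hiE := Finset.mem_erase.mpr ⟨hhi, I.hiE⟩
      heE := Finset.mem_erase.mpr ⟨hhe, I.heE⟩
      dhi := I.dhi, dhe := I.dhe, thi := I.thi, hhi := I.hhi
      the := I.the, hhe := I.hhe, uv := I.uv, lu := I.lu, lv := I.lv
      outU := fun e heE' => I.outU e (Finset.mem_of_mem_erase heE')
      inV := fun e heE' => I.inV e (Finset.mem_of_mem_erase heE')
      noUU := fun e heE' => I.noUU e (Finset.mem_of_mem_erase heE')
      inj := I.inj
      lleafT := fun e heE' => I.lleafT e (Finset.mem_of_mem_erase heE')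
      lleafU := fun e heE' => I.lleafU e (Finset.mem_of_mem_erase heE')
      lin1 := fun x hx => le_trans (Finset.card_le_card
        (Finset.filter_subset_filter _ (Finset.erase_subset _ _))) (I.lin1 x hx)
      wfT := fun e heE' => I.wfT e (Finset.mem_of_mem_erase heE')
      wfH := fun e heE' => I.wfH e (Finset.mem_of_mem_erase heE')
      noLoop := fun e heE' => I.noLoop e (Finset.mem_of_mem_erase heE') }

lemma Inv.deleteLeaf {N : Net n} {u v hi he x0 : ℕ} (I : Inv N u v hi he)
    (hx : N.lbl x0 ≠ none) : Inv (N.deleteLeaf x0) u v hi he := by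
  have hxu : x0 ≠ u := fun h => hx (h ▸ I.lu)
  have hxv : x0 ≠ v := fun h => hx (h ▸ I.lv)
  have hmem : ∀ e, e ∈ (N.deleteLeaf x0).E ↔
      e ∈ N.E ∧ N.tail e ≠ x0 ∧ N.head e ≠ x0 := by
    intro e
    show e ∈ N.E \ N.incE x0 ↔ _
    rw [Finset.mem_sdiff, mem_incE]
    constructor
    · rintro ⟨h1, h2⟩
      exact ⟨h1, fun h => h2 ⟨h1, Or.inl h⟩, fun h => h2 ⟨h1, Or.inr h⟩⟩
    · rintro ⟨h1, h2, h3⟩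
      exact ⟨h1, fun h => h.2.elim h2 h3⟩
  have hlbl : ∀ z, z ≠ x0 → (N.deleteLeaf x0).lbl z = N.lbl z := by
    intro z hz
    exact Function.update_of_ne hz _ _
  have htl : (N.deleteLeaf x0).tail = N.tail := rfl
  have hhd : (N.deleteLeaf x0).head = N.head := rfl
  have hdr : (N.deleteLeaf x0).dir = N.dir := rfl
  refine
    { hne := I.hne
      hiE := (hmem hi).mpr ⟨I.hiE, by rw [I.thi]; exact fun h => hxu h.symm,
        by rw [I.hhi]; exact fun h => hxv h.symm⟩
      heE := (hmem he).mpr ⟨I.heE, by rw [I.the]; exact fun h => hxu h.symm,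
        by rw [I.hhe]; exact fun h => hxv h.symm⟩
      dhi := I.dhi, dhe := I.dhe, thi := I.thi, hhi := I.hhi
      the := I.the, hhe := I.hhe, uv := I.uv
      lu := by rw [show (N.deleteLeaf x0).lbl u = N.lbl u from
        Function.update_of_ne (Ne.symm hxu) _ _]; exact I.lu
      lv := by rw [show (N.deleteLeaf x0).lbl v = N.lbl v from
        Function.update_of_ne (Ne.symm hxv) _ _]; exact I.lv
      outU := fun e heE' => I.outU e ((hmem e).mp heE').1
      inV := fun e heE' => I.inV e ((hmem e).mp heE').1
      noUU := fun e heE' => I.noUU e ((hmem e).mp heE').1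
      inj := ?_
      lleafT := ?_
      lleafU := ?_
      lin1 := ?_
      wfT := ?_
      wfH := ?_
      noLoop := fun e heE' => I.noLoop e ((hmem e).mp heE').1 }
  · -- inj
    intro z w' hz hzw
    by_cases h1 : z = x0
    · exact absurd (by rw [h1]; exact Function.update_self _ _ _) hz
    by_cases h2 : w' = x0
    · have hx0 : (N.deleteLeaf x0).lbl x0 = none := Function.update_self _ _ _
      rw [h2, hx0] at hzw
      rw [hlbl z h1] at hz hzw
      exact absurd hzw hz
    · rw [hlbl z h1] at hz hzw
      rw [hlbl w' h2] at hzw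
      exact I.inj z w' hz hzw
  · -- lleafT
    intro e heE'
    obtain ⟨h1, h2, _⟩ := (hmem e).mp heE'
    rw [htl, hlbl _ h2]
    exact I.lleafT e h1
  · -- lleafU
    intro e heE' hd
    obtain ⟨h1, _, h3⟩ := (hmem e).mp heE'
    rw [hhd, hlbl _ h3]
    exact I.lleafU e h1 hd
  · -- lin1
    intro z hz
    have hzx : z ≠ x0 := fun h => hz (by rw [h]; exact Function.update_self _ _ _)
    rw [hlbl z hzx] at hz
    refine le_trans (Finset.card_le_card ?_) (I.lin1 z hz)
    intro e he'
    rw [Finset.mem_filter] at he' ⊢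
    exact ⟨((hmem e).mp he'.1).1, he'.2⟩
  · -- wfT
    intro e heE'
    obtain ⟨h1, h2, _⟩ := (hmem e).mp heE'
    exact Finset.mem_erase.mpr ⟨h2, I.wfT e h1⟩
  · -- wfH
    intro e heE'
    obtain ⟨h1, _, h3⟩ := (hmem e).mp heE'
    exact Finset.mem_erase.mpr ⟨h3, I.wfH e h1⟩

/-- Key lemma: replacing the two edges at a suppressed node `w` preserves `Inv`,
when the new edge runs from an unlabelled node `q ≠ u` to a labelled node `ζ`. -/
lemma Inv.replace {N : Net n} {u v hi he w q ζ en er : ℕ} (I : Inv N u v hi he)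
    (hwu : w ≠ u) (hwv : w ≠ v)
    (hner : en ≠ er) (henE : en ∈ N.E) (herE : er ∈ N.E)
    (hq0 : N.lbl q = none) (hqu : q ≠ u) (hqw : q ≠ w) (hqV : q ∈ N.V)
    (hz0 : N.lbl ζ ≠ none) (hzw : ζ ≠ w) (hzV : ζ ∈ N.V)
    (hinc : ∀ e ∈ N.E, (N.tail e = w ∨ N.head e = w) ↔ (e = en ∨ e = er))
    (hzin : ∃ e ∈ N.E, (e = en ∨ e = er) ∧ N.dir e = true ∧ N.head e = ζ)
    (hout : ∀ e ∈ N.E, (e = en ∨ e = er) → N.dir e = true → N.head e ≠ w →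
      N.lbl (N.head e) ≠ none) :
    Inv (N.replaceEdge w en er q ζ true) u v hi he ∧
    (N.replaceEdge w en er q ζ true).lbl = N.lbl ∧
    (∀ z ∈ N.V, z ≠ w → z ∈ (N.replaceEdge w en er q ζ true).V) ∧
    (∀ e ∈ N.E, N.tail e ≠ w → N.head e ≠ w →
      e ∈ (N.replaceEdge w en er q ζ true).E ∧
      (N.replaceEdge w en er q ζ true).tail e = N.tail e ∧
      (N.replaceEdge w en er q ζ true).head e = N.head e ∧
      (N.replaceEdge w en er q ζ true).dir e = N.dir e) ∧
    (∀ e ∈ N.E, N.dir e = true → N.head e ≠ w → N.lbl (N.head e) = none →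
      e ∈ (N.replaceEdge w en er q ζ true).E ∧
      (N.replaceEdge w en er q ζ true).dir e = true ∧
      (N.replaceEdge w en er q ζ true).head e = N.head e) := by
  set M := N.replaceEdge w en er q ζ true with hM
  have hMV : M.V = N.V.erase w := rfl
  have hME : M.E = N.E.erase er := rfl
  have hMl : M.lbl = N.lbl := rfl
  have hnotin : ∀ e, e ∈ N.E → e ≠ en → e ≠ er →
      M.tail e = N.tail e ∧ M.head e = N.head e ∧ M.dir e = N.dir e ∧
      N.tail e ≠ w ∧ N.head e ≠ w := by
    intro e heE h1 h2
    have h3 : ¬(N.tail e = w ∨ N.head e = w) := fun h => ((hinc e heE).mp h).elim h1 h2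
    push_neg at h3
    exact ⟨Function.update_of_ne h1 _ _, Function.update_of_ne h1 _ _,
      Function.update_of_ne h1 _ _, h3.1, h3.2⟩
  have hen : M.tail en = q ∧ M.head en = ζ ∧ M.dir en = true :=
    ⟨Function.update_self _ _ _, Function.update_self _ _ _, Function.update_self _ _ _⟩
  have hhien : hi ≠ en ∧ hi ≠ er := by
    constructor <;>
    · intro h
      have := (hinc hi I.hiE).mpr (by rw [h]; simp)
      rw [I.thi, I.hhi] at this
      exact this.elim (fun h' => hwu h'.symm) (fun h' => hwv h'.symm)
  have hheen : he ≠ en ∧ he ≠ er := by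
    constructor <;>
    · intro h
      have := (hinc he I.heE).mpr (by rw [h]; simp)
      rw [I.the, I.hhe] at this
      exact this.elim (fun h' => hwu h'.symm) (fun h' => hwv h'.symm)
  have hzu : ζ ≠ u := fun h => hz0 (h ▸ I.lu)
  have hzv : ζ ≠ v := fun h => hz0 (h ▸ I.lv)
  have hqz : q ≠ ζ := fun h => hz0 (h ▸ hq0)
  have hmemE : ∀ e, e ∈ M.E ↔ e ∈ N.E ∧ e ≠ er := by
    intro e; rw [hME, Finset.mem_erase]; tauto
  refine ⟨?_, hMl, ?_, ?_, ?_⟩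
  · refine
      { hne := I.hne
        hiE := (hmemE hi).mpr ⟨I.hiE, hhien.2⟩
        heE := (hmemE he).mpr ⟨I.heE, hheen.2⟩
        dhi := by rw [show M.dir hi = N.dir hi from Function.update_of_ne hhien.1 _ _]
                  exact I.dhi
        dhe := by rw [show M.dir he = N.dir he from Function.update_of_ne hheen.1 _ _]
                  exact I.dhe
        thi := by rw [show M.tail hi = N.tail hi from Function.update_of_ne hhien.1 _ _]
                  exact I.thi
        hhi := by rw [show M.head hi = N.head hi from Function.update_of_ne hhien.1 _ _]
                  exact I.hhi
        the := by rw [show M.tail he = N.tail he from Function.update_of_ne hheen.1 _ _]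
                  exact I.the
        hhe := by rw [show M.head he = N.head he from Function.update_of_ne hheen.1 _ _]
                  exact I.hhe
        uv := I.uv
        lu := I.lu, lv := I.lv
        outU := ?_, inV := ?_, noUU := ?_
        inj := I.inj
        lleafT := ?_, lleafU := ?_, lin1 := ?_, wfT := ?_, wfH := ?_, noLoop := ?_ }
    · -- outU
      intro e heE' hd ht
      obtain ⟨heE, hner'⟩ := (hmemE e).mp heE'
      by_cases h : e = en
      · subst h; rw [hen.1] at ht; exact absurd ht hqu
      · obtain ⟨h1, h2, h3, _, _⟩ := hnotin e heE h hner'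
        rw [h2]; exact I.outU e heE (h3 ▸ hd) (h1 ▸ ht)
    · -- inV
      intro e heE' hd hh
      obtain ⟨heE, hner'⟩ := (hmemE e).mp heE'
      by_cases h : e = en
      · subst h; rw [hen.2.1] at hh; exact absurd hh hzv
      · obtain ⟨h1, h2, h3, _, _⟩ := hnotin e heE h hner'
        rw [h1]; exact I.inV e heE (h3 ▸ hd) (h2 ▸ hh)
    · -- noUU
      intro e heE' hd
      obtain ⟨heE, hner'⟩ := (hmemE e).mp heE'
      by_cases h : e = en
      · subst h; rw [hen.2.2] at hd; exact absurd hd (by simp)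
      · obtain ⟨h1, h2, h3, _, _⟩ := hnotin e heE h hner'
        rw [h1, h2]; exact I.noUU e heE (h3 ▸ hd)
    · -- lleafT
      intro e heE'
      obtain ⟨heE, hner'⟩ := (hmemE e).mp heE'
      by_cases h : e = en
      · subst h; rw [hen.1]; exact hq0
      · obtain ⟨h1, _, _, _, _⟩ := hnotin e heE h hner'
        rw [h1]; exact I.lleafT e heE
    · -- lleafU
      intro e heE' hd
      obtain ⟨heE, hner'⟩ := (hmemE e).mp heE'
      by_cases h : e = en
      · subst h; rw [hen.2.2] at hd; exact absurd hd (by simp)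
      · obtain ⟨_, h2, h3, _, _⟩ := hnotin e heE h hner'
        rw [h2]; exact I.lleafU e heE (h3 ▸ hd)
    · -- lin1
      intro z hz
      by_cases hzζ : z = ζ
      · subst hzζ
        obtain ⟨e', he'E, he'or, he'd, he'h⟩ := hzin
        apply Finset.card_le_one.mpr
        have key : ∀ e ∈ M.E.filter (fun e => M.dir e = true ∧ M.head e = z), e = en := by
          intro e hef
          rw [Finset.mem_filter] at hef
          obtain ⟨heE', hd, hh⟩ := hef
          obtain ⟨heE, hner'⟩ := (hmemE e).mp heE'
          by_contra hcon
          obtain ⟨_, h2, h3, _, _⟩ := hnotin e heE hcon hner'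
          have heN : e ∈ N.E.filter (fun e => N.dir e = true ∧ N.head e = z) :=
            Finset.mem_filter.mpr ⟨heE, h3 ▸ hd, h2 ▸ hh⟩
          have he'N : e' ∈ N.E.filter (fun e => N.dir e = true ∧ N.head e = z) :=
            Finset.mem_filter.mpr ⟨he'E, he'd, he'h⟩
          have := Finset.card_le_one.mp (I.lin1 z hz) e heN e' he'N
          subst this
          exact he'or.elim hcon hner'
        intro a ha b hb
        rw [key a ha, key b hb]
      · refine le_trans (Finset.card_le_card ?_) (I.lin1 z hz)
        intro e hef
        rw [Finset.mem_filter] at hef ⊢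
        obtain ⟨heE', hd, hh⟩ := hef
        obtain ⟨heE, hner'⟩ := (hmemE e).mp heE'
        by_cases h : e = en
        · subst h; rw [hen.2.1] at hh; exact absurd hh.symm hzζ
        · obtain ⟨_, h2, h3, _, _⟩ := hnotin e heE h hner'
          exact ⟨heE, h3 ▸ hd, h2 ▸ hh⟩
    · -- wfT
      intro e heE'
      obtain ⟨heE, hner'⟩ := (hmemE e).mp heE'
      by_cases h : e = en
      · subst h; rw [hen.1, hMV]; exact Finset.mem_erase.mpr ⟨hqw, hqV⟩
      · obtain ⟨h1, _, _, h4, _⟩ := hnotin e heE h hner'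
        rw [h1, hMV]; exact Finset.mem_erase.mpr ⟨h4, I.wfT e heE⟩
    · -- wfH
      intro e heE'
      obtain ⟨heE, hner'⟩ := (hmemE e).mp heE'
      by_cases h : e = en
      · subst h; rw [hen.2.1, hMV]; exact Finset.mem_erase.mpr ⟨hzw, hzV⟩
      · obtain ⟨_, h2, _, _, h5⟩ := hnotin e heE h hner'
        rw [h2, hMV]; exact Finset.mem_erase.mpr ⟨h5, I.wfH e heE⟩
    · -- noLoop
      intro e heE'
      obtain ⟨heE, hner'⟩ := (hmemE e).mp heE'
      by_cases h : e = en
      · subst h; rw [hen.1, hen.2.1]; exact hqz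
      · obtain ⟨h1, h2, _, _, _⟩ := hnotin e heE h hner'
        rw [h1, h2]; exact I.noLoop e heE
  · -- V clause
    intro z hzV' hzw'
    rw [hMV]; exact Finset.mem_erase.mpr ⟨hzw', hzV'⟩
  · -- untouched clause
    intro e heE ht hh
    have h1 : e ≠ en ∧ e ≠ er := by
      constructor <;> · intro h; exact ((hinc e heE).mpr (by rw [h]; simp)).elim ht hh
    obtain ⟨ha, hb, hc, _, _⟩ := hnotin e heE h1.1 h1.2
    exact ⟨(hmemE e).mpr ⟨heE, h1.2⟩, ha, hb, hc⟩
  · -- directed-into-unlabelled clause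
    intro e heE hd hh hl
    have h1 : e ≠ en ∧ e ≠ er := by
      constructor <;> · intro h; exact (hout e heE (by rw [h]; simp) hd hh) hl
    obtain ⟨_, hb, hc, _, _⟩ := hnotin e heE h1.1 h1.2
    exact ⟨(hmemE e).mpr ⟨heE, h1.2⟩, hc ▸ hd, hb⟩

lemma suppress_nil {N : Net n} {w : ℕ} (h : (N.incE w).sort (· ≤ ·) = []) :
    N.suppress w = N := by
  unfold Net.suppress; rw [h]

lemma suppress_big {N : Net n} {w e1 e2 e3 : ℕ} {t : List ℕ}
    (h : (N.incE w).sort (· ≤ ·) = e1 :: e2 :: e3 :: t) : N.suppress w = N := by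
  unfold Net.suppress; rw [h]

lemma suppress_single {N : Net n} {w e : ℕ} (h : (N.incE w).sort (· ≤ ·) = [e]) :
    N.suppress w = { N with V := N.V.erase w, E := N.E.erase e } := by
  unfold Net.suppress; rw [h]

lemma suppress_pair {N : Net n} {w e1 e2 : ℕ} (h : (N.incE w).sort (· ≤ ·) = [e1, e2]) :
    N.suppress w =
      if N.dir e1 = true ∧ N.tail e1 = w then
        N.replaceEdge w e1 e2 (if N.tail e2 = w then N.head e2 else N.tail e2)
          (if N.tail e1 = w then N.head e1 else N.tail e1) true
      else if N.dir e2 = true ∧ N.tail e2 = w then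
        N.replaceEdge w e1 e2 (if N.tail e1 = w then N.head e1 else N.tail e1)
          (if N.tail e2 = w then N.head e2 else N.tail e2) true
      else if N.dir e1 = true then
        N.replaceEdge w e1 e2 (if N.tail e1 = w then N.head e1 else N.tail e1)
          (if N.tail e2 = w then N.head e2 else N.tail e2) true
      else if N.dir e2 = true then
        N.replaceEdge w e1 e2 (if N.tail e2 = w then N.head e2 else N.tail e2)
          (if N.tail e1 = w then N.head e1 else N.tail e1) true
      else N.replaceEdge w e1 e2 (if N.tail e1 = w then N.head e1 else N.tail e1)
          (if N.tail e2 = w then N.head e2 else N.tail e2) false := by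
  unfold Net.suppress; rw [h]

/-- Core suppression lemma. -/
lemma Inv.suppress {N : Net n} {u v hi he w : ℕ} (I : Inv N u v hi he)
    (hwV : w ∈ N.V)
    (hez : ∃ ez ∈ N.E, N.dir ez = true ∧ N.tail ez = w ∧ N.lbl (N.head ez) ≠ none)
    (hin : N.indeg w ≠ 0 ∨ N.undeg w ≠ 0 ∨ N.deg w ≠ 2) :
    Inv (N.suppress w) u v hi he ∧ (N.suppress w).lbl = N.lbl ∧
    (∀ z ∈ N.V, z ≠ w → z ∈ (N.suppress w).V) ∧
    (∀ e ∈ N.E, N.tail e ≠ w → N.head e ≠ w → e ∈ (N.suppress w).E ∧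
      (N.suppress w).tail e = N.tail e ∧ (N.suppress w).head e = N.head e ∧
      (N.suppress w).dir e = N.dir e) ∧
    (∀ e ∈ N.E, N.dir e = true → N.head e ≠ w → N.lbl (N.head e) = none →
      e ∈ (N.suppress w).E ∧ (N.suppress w).dir e = true ∧
      (N.suppress w).head e = N.head e) := by
  obtain ⟨ez, hezE, hezd, hezt, hezl⟩ := hez
  have hwu : w ≠ u := by
    intro h
    exact hezl (by rw [I.outU ez hezE hezd (hezt.trans h)]; exact I.lv)
  have hezh : N.head ez ≠ w := by
    intro h
    exact I.noLoop ez hezE (hezt.trans h.symm)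
  have hhiez : hi ≠ ez := fun h => hwu ((I.thi.symm.trans (h ▸ rfl)).trans hezt).symm
  have hheez : he ≠ ez := fun h => hwu ((I.the.symm.trans (h ▸ rfl)).trans hezt).symm
  rcases hsort : (N.incE w).sort (· ≤ ·) with _ | ⟨e1, _ | ⟨e2, _ | ⟨e3, t⟩⟩⟩
  · rw [suppress_nil hsort]
    exact ⟨I, rfl, fun z hz _ => hz, fun e heE _ _ => ⟨heE, rfl, rfl, rfl⟩,
      fun e heE hd _ _ => ⟨heE, hd, rfl⟩⟩
  · -- singleton case
    have hiff : ∀ z, z ∈ N.incE w ↔ z = e1 := by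
      intro z
      rw [← Finset.mem_sort (α := ℕ) (· ≤ ·), hsort]
      simp
    have hez1 : ez = e1 := (hiff ez).mp (mem_incE.mpr ⟨hezE, Or.inl hezt⟩)
    subst hez1
    have hwv : w ≠ v := by
      intro h
      have h2 : hi = ez := (hiff hi).mp (mem_incE.mpr ⟨I.hiE, Or.inr (I.hhi.trans h.symm)⟩)
      exact hhiez h2
    have hni : ∀ e ∈ N.E, e ≠ ez → N.tail e ≠ w ∧ N.head e ≠ w := by
      intro e heE hne'
      constructor <;> intro h
      · exact hne' ((hiff e).mp (mem_incE.mpr ⟨heE, Or.inl h⟩))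
      · exact hne' ((hiff e).mp (mem_incE.mpr ⟨heE, Or.inr h⟩))
    rw [suppress_single hsort]
    refine ⟨?_, rfl, fun z hz hzw => Finset.mem_erase.mpr ⟨hzw, hz⟩, ?_, ?_⟩
    · exact
      { hne := I.hne
        hiE := Finset.mem_erase.mpr ⟨hhiez, I.hiE⟩
        heE := Finset.mem_erase.mpr ⟨hheez, I.heE⟩
        dhi := I.dhi, dhe := I.dhe, thi := I.thi, hhi := I.hhi
        the := I.the, hhe := I.hhe, uv := I.uv, lu := I.lu, lv := I.lv
        outU := fun e heE' => I.outU e (Finset.mem_of_mem_erase heE')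
        inV := fun e heE' => I.inV e (Finset.mem_of_mem_erase heE')
        noUU := fun e heE' => I.noUU e (Finset.mem_of_mem_erase heE')
        inj := I.inj
        lleafT := fun e heE' => I.lleafT e (Finset.mem_of_mem_erase heE')
        lleafU := fun e heE' => I.lleafU e (Finset.mem_of_mem_erase heE')
        lin1 := fun x hx => le_trans (Finset.card_le_card
          (Finset.filter_subset_filter _ (Finset.erase_subset _ _))) (I.lin1 x hx)
        wfT := fun e heE' => Finset.mem_erase.mpr
          ⟨(hni e (Finset.mem_of_mem_erase heE') (Finset.ne_of_mem_erase heE')).1,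
            I.wfT e (Finset.mem_of_mem_erase heE')⟩
        wfH := fun e heE' => Finset.mem_erase.mpr
          ⟨(hni e (Finset.mem_of_mem_erase heE') (Finset.ne_of_mem_erase heE')).2,
            I.wfH e (Finset.mem_of_mem_erase heE')⟩
        noLoop := fun e heE' => I.noLoop e (Finset.mem_of_mem_erase heE') }
    · intro e heE ht hh
      have hne' : e ≠ ez := fun h => ht (h ▸ hezt)
      exact ⟨Finset.mem_erase.mpr ⟨hne', heE⟩, rfl, rfl, rfl⟩
    · intro e heE hd hh hl
      have hne' : e ≠ ez := fun h => hezl (h ▸ hl)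
      exact ⟨Finset.mem_erase.mpr ⟨hne', heE⟩, hd, rfl⟩
  · -- pair case
    have hiff : ∀ z, z ∈ N.incE w ↔ (z = e1 ∨ z = e2) := by
      intro z
      rw [← Finset.mem_sort (α := ℕ) (· ≤ ·), hsort]
      simp
    have hne12 : e1 ≠ e2 := by
      have hnd := Finset.sort_nodup (N.incE w) (· ≤ ·)
      rw [hsort] at hnd
      simp at hnd
      exact hnd
    have hIe : ∀ z, z = e1 ∨ z = e2 → z ∈ N.E ∧ (N.tail z = w ∨ N.head z = w) :=
      fun z h => mem_incE.mp ((hiff z).mpr h)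
    have hez12 : ez = e1 ∨ ez = e2 := (hiff ez).mp (mem_incE.mpr ⟨hezE, Or.inl hezt⟩)
    have hwv : w ≠ v := by
      intro h
      have hhi' : hi = e1 ∨ hi = e2 :=
        (hiff hi).mp (mem_incE.mpr ⟨I.hiE, Or.inr (I.hhi.trans h.symm)⟩)
      have hhe' : he = e1 ∨ he = e2 :=
        (hiff he).mp (mem_incE.mpr ⟨I.heE, Or.inr (I.hhe.trans h.symm)⟩)
      have hne' : hi ≠ he := I.hne
      rcases hez12 with h1 | h1 <;> rcases hhi' with h2 | h2 <;>
        rcases hhe' with h3 | h3 <;> omega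
    -- the other edge g
    obtain ⟨g, hgor, hgez, hswap⟩ :
        ∃ g, (g = e1 ∨ g = e2) ∧ g ≠ ez ∧ ((ez = e1 ∧ g = e2) ∨ (ez = e2 ∧ g = e1)) := by
      rcases hez12 with h | h
      · exact ⟨e2, Or.inr rfl, by omega, Or.inl ⟨h, rfl⟩⟩
      · exact ⟨e1, Or.inl rfl, by omega, Or.inr ⟨h, rfl⟩⟩
    obtain ⟨hgE, hginc⟩ := hIe g hgor
    -- rule out g being a second out-edge at w
    have hgcase : (N.dir g = true ∧ N.head g = w ∧ N.tail g ≠ w) ∨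
        (N.dir g = false) := by
      by_cases hd : N.dir g = true
      · left
        have htg : N.tail g ≠ w := by
          intro hgt
          exfalso
          have hin0 : N.indeg w = 0 := by
            rw [Net.indeg, Finset.card_eq_zero, Finset.filter_eq_empty_iff]
            rintro e heE ⟨hd', hh'⟩
            rcases (hiff e).mp (mem_incE.mpr ⟨heE, Or.inr hh'⟩) with h | h <;>
              rcases hswap with ⟨hA, hB⟩ | ⟨hA, hB⟩
            · exact hezh ((hA ▸ h : e = ez) ▸ hh')
            · exact I.noLoop g hgE (hgt.trans (((hB ▸ h : e = g) ▸ hh' : N.head g = w)).symm)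
            · exact I.noLoop g hgE (hgt.trans (((hB ▸ h : e = g) ▸ hh' : N.head g = w)).symm)
            · exact hezh ((hA ▸ h : e = ez) ▸ hh')
          have hun0 : N.undeg w = 0 := by
            rw [Net.undeg, Finset.card_eq_zero, Finset.filter_eq_empty_iff]
            rintro e heE ⟨hd', hor⟩
            rcases (hiff e).mp (mem_incE.mpr ⟨heE, hor⟩) with h | h <;>
              rcases hswap with ⟨hA, hB⟩ | ⟨hA, hB⟩
            · exact absurd ((hA ▸ h : e = ez) ▸ hd') (by rw [hezd]; simp)
            · exact absurd ((hB ▸ h : e = g) ▸ hd') (by rw [hd]; simp)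
            · exact absurd ((hB ▸ h : e = g) ▸ hd') (by rw [hd]; simp)
            · exact absurd ((hA ▸ h : e = ez) ▸ hd') (by rw [hezd]; simp)
          have hout2 : N.outdeg w = 2 := by
            rw [Net.outdeg]
            have : N.E.filter (fun e => N.dir e = true ∧ N.tail e = w) = {ez, g} := by
              ext e
              rw [Finset.mem_filter, Finset.mem_insert, Finset.mem_singleton]
              constructor
              · rintro ⟨heE, _, ht'⟩
                rcases (hiff e).mp (mem_incE.mpr ⟨heE, Or.inl ht'⟩) with h | h <;>
                  rcases hswap with ⟨hA, hB⟩ | ⟨hA, hB⟩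
                · exact Or.inl (hA ▸ h)
                · exact Or.inr (hB ▸ h)
                · exact Or.inr (hB ▸ h)
                · exact Or.inl (hA ▸ h)
              · rintro (rfl | rfl)
                · exact ⟨hezE, hezd, hezt⟩
                · exact ⟨hgE, hd, hgt⟩
            rw [this, Finset.card_pair (Ne.symm hgez)]
          rcases hin with h | h | h
          · exact h hin0
          · exact h hun0
          · exact h (by rw [Net.deg, hin0, hun0, hout2])
        exact ⟨hd, hginc.resolve_left htg, htg⟩
      · right; exact Bool.not_eq_true _ ▸ (by simpa using hd)
    have hqfacts : N.lbl (if N.tail g = w then N.head g else N.tail g) = none ∧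
        (if N.tail g = w then N.head g else N.tail g) ≠ u ∧
        (if N.tail g = w then N.head g else N.tail g) ≠ w ∧
        (if N.tail g = w then N.head g else N.tail g) ∈ N.V := by
      rcases hgcase with ⟨hgd, hgh, hgt⟩ | hgd
      · rw [if_neg hgt]
        refine ⟨I.lleafT g hgE, ?_, hgt, I.wfT g hgE⟩
        intro h
        exact hwv (hgh.symm.trans (I.outU g hgE hgd h))
      · by_cases htw : N.tail g = w
        · rw [if_pos htw]
          exact ⟨I.lleafU g hgE hgd, (I.noUU g hgE hgd).2.1,
            fun h => I.noLoop g hgE (htw.trans h.symm), I.wfH g hgE⟩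
        · rw [if_neg htw]
          exact ⟨I.lleafT g hgE, (I.noUU g hgE hgd).1, htw, I.wfT g hgE⟩
    obtain ⟨hq0, hqu, hqw, hqV⟩ := hqfacts
    have hout' : ∀ e ∈ N.E, (e = ez ∨ e = g) → N.dir e = true → N.head e ≠ w →
        N.lbl (N.head e) ≠ none := by
      rintro e heE (rfl | rfl) hd' hh'
      · exact hezl
      · rcases hgcase with ⟨_, hgh, _⟩ | hgd
        · exact absurd hgh hh'
        · rw [hgd] at hd'; exact absurd hd' (by simp)
    have hinc' : ∀ e ∈ N.E, (N.tail e = w ∨ N.head e = w) ↔ (e = ez ∨ e = g) := by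
      intro e heE
      constructor
      · intro h
        have h2 := (hiff e).mp (mem_incE.mpr ⟨heE, h⟩)
        rcases hswap with ⟨hA, hB⟩ | ⟨hA, hB⟩ <;> omega
      · rintro (rfl | rfl)
        · exact Or.inl hezt
        · exact hginc
    rcases hswap with ⟨hA, hB⟩ | ⟨hA, hB⟩
    · subst hA; subst hB
      rw [suppress_pair hsort, if_pos ⟨hezd, hezt⟩, if_pos hezt]
      exact Inv.replace I hwu hwv (Ne.symm hgez) hezE hgE hq0 hqu hqw hqV hezl hezh
        (I.wfH ez hezE) hinc' ⟨ez, hezE, Or.inl rfl, hezd, rfl⟩ hout'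
    · subst hA; subst hB
      have hc1 : ¬(N.dir g = true ∧ N.tail g = w) := by
        rcases hgcase with ⟨hgd, hgh, hgt⟩ | hgd
        · rintro ⟨_, h⟩; exact hgt h
        · rintro ⟨h, _⟩; rw [hgd] at h; simp at h
      rw [suppress_pair hsort, if_neg hc1, if_pos ⟨hezd, hezt⟩, if_pos hezt]
      exact Inv.replace I hwu hwv hgez hgE hezE hq0 hqu hqw hqV hezl hezh
        (I.wfH ez hezE) (fun e heE => (hinc' e heE).trans or_comm)
        ⟨ez, hezE, Or.inr rfl, hezd, rfl⟩
        (fun e heE ho => hout' e heE ho.symm)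
  · rw [suppress_big hsort]
    exact ⟨I, rfl, fun z hz _ => hz, fun e heE _ _ => ⟨heE, rfl, rfl, rfl⟩,
      fun e heE hd _ _ => ⟨heE, hd, rfl⟩⟩

lemma Inv.suppressIf {N : Net n} {u v hi he w : ℕ} (I : Inv N u v hi he)
    (hwV : w ∈ N.V)
    (hez : ∃ ez ∈ N.E, N.dir ez = true ∧ N.tail ez = w ∧ N.lbl (N.head ez) ≠ none) :
    Inv (N.suppressIf w) u v hi he ∧ (N.suppressIf w).lbl = N.lbl ∧
    (∀ z ∈ N.V, z ≠ w → z ∈ (N.suppressIf w).V) ∧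
    (∀ e ∈ N.E, N.tail e ≠ w → N.head e ≠ w → e ∈ (N.suppressIf w).E ∧
      (N.suppressIf w).tail e = N.tail e ∧ (N.suppressIf w).head e = N.head e ∧
      (N.suppressIf w).dir e = N.dir e) ∧
    (∀ e ∈ N.E, N.dir e = true → N.head e ≠ w → N.lbl (N.head e) = none →
      e ∈ (N.suppressIf w).E ∧ (N.suppressIf w).dir e = true ∧
      (N.suppressIf w).head e = N.head e) := by
  by_cases hs : N.Suppressible w
  · unfold Net.suppressIf
    rw [if_pos hs]
    refine Inv.suppress I hwV hez ?_
    rcases hs.2 with ⟨hdeg2, hroot⟩ | ⟨hdeg1, _⟩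
    · by_contra hcon
      push_neg at hcon
      exact hroot ⟨hwV, hcon.1, hcon.2.1⟩
    · right; right; omega
  · unfold Net.suppressIf
    rw [if_neg hs]
    exact ⟨I, rfl, fun z hz _ => hz, fun e heE _ _ => ⟨heE, rfl, rfl, rfl⟩,
      fun e heE hd _ _ => ⟨heE, hd, rfl⟩⟩

lemma headI_mem_of_mem {s : Finset ℕ} {e : ℕ} (he : e ∈ s) :
    ((s.sort (· ≤ ·)).headI) ∈ s := by
  have h1 : e ∈ s.sort (· ≤ ·) := (Finset.mem_sort _).mpr he
  rcases h : s.sort (· ≤ ·) with _ | ⟨c, l⟩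
  · rw [h] at h1; simp at h1
  · have h2 : c ∈ s.sort (· ≤ ·) := by rw [h]; simp
    show c ∈ s
    exact (Finset.mem_sort _).mp h2

theorem Inv.step {N : Net n} {u v hi he : ℕ} (I : Inv N u v hi he) (a b : Fin n) :
    Inv (N.reduceCherry a b) u v hi he := by
  by_cases hT : N.TreeCherry a b
  · unfold Net.reduceCherry
    rw [if_pos hT]
    obtain ⟨x, y, p, hax, hby, hxy, ⟨ex, hexE, hexd, hext, hexh⟩,
      ⟨ey, heyE, heyd, heyt, heyh⟩⟩ := hT
    have hxl : N.lbl x ≠ none := by rw [hax.2]; simp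
    have hyl : N.lbl y ≠ none := by rw [hby.2]; simp
    have hlx : N.labelNode a = x := labelNode_eq I hax
    have hpp : N.parentOf x = p := parentOf_eq I hxl hexE hexd hext hexh
    have hred : N.reduceTree a b = (N.deleteLeaf x).suppressIf p := by
      simp only [Net.reduceTree]
      rw [hlx, hpp]
    rw [hred]
    have I' : Inv (N.deleteLeaf x) u v hi he := I.deleteLeaf hxl
    have hlp : N.lbl p = none := hext ▸ I.lleafT ex hexE
    have hpx : p ≠ x := fun h => hxl (h ▸ hlp)
    have hyx : y ≠ x := fun h => hxy h.symm
    have hpV' : p ∈ (N.deleteLeaf x).V :=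
      Finset.mem_erase.mpr ⟨hpx, hext ▸ I.wfT ex hexE⟩
    have heyE' : ey ∈ (N.deleteLeaf x).E := by
      show ey ∈ N.E \ N.incE x
      rw [Finset.mem_sdiff, mem_incE]
      refine ⟨heyE, fun hc => ?_⟩
      rcases hc.2 with hh | hh
      · exact hpx (heyt ▸ hh)
      · exact hyx (heyh ▸ hh)
    have hez' : ∃ ez ∈ (N.deleteLeaf x).E, (N.deleteLeaf x).dir ez = true ∧
        (N.deleteLeaf x).tail ez = p ∧
        (N.deleteLeaf x).lbl ((N.deleteLeaf x).head ez) ≠ none := by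
      refine ⟨ey, heyE', heyd, heyt, ?_⟩
      show Function.update N.lbl x none (N.head ey) ≠ none
      rw [heyh, Function.update_of_ne hyx]
      exact hyl
    exact (I'.suppressIf hpV' hez').1
  · by_cases hR : N.RetCherry a b
    · unfold Net.reduceCherry
      rw [if_neg hT, if_pos hR]
      obtain ⟨x, y, pa, pb, hax, hby, hxy, ⟨eax, heaxE, heaxd, heaxt, heaxh⟩, hhyb,
        ⟨eby, hebyE, hebyd, hebyt, hebyh⟩, ⟨eba, hebaE, hebad, hebat, hebah⟩⟩ := hR
      have hxl : N.lbl x ≠ none := by rw [hax.2]; simp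
      have hyl : N.lbl y ≠ none := by rw [hby.2]; simp
      have hlx : N.labelNode a = x := labelNode_eq I hax
      have hly : N.labelNode b = y := labelNode_eq I hby
      have hpa : N.parentOf x = pa := parentOf_eq I hxl heaxE heaxd heaxt heaxh
      have hpb : N.parentOf y = pb := parentOf_eq I hyl hebyE hebyd hebyt hebyh
      have hred : N.reduceRet a b =
          (({ N with E := N.E.erase (((N.E.filter (fun e => N.dir e = true ∧
            N.tail e = pb ∧ N.head e = pa)).sort (· ≤ ·)).headI) } : Net n).suppressIf
            pb).suppress pa := by
        simp only [Net.reduceRet]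
        rw [hlx, hly, hpa, hpb]
      rw [hred]
      set F := N.E.filter (fun e => N.dir e = true ∧ N.tail e = pb ∧ N.head e = pa)
        with hF
      set eint := (F.sort (· ≤ ·)).headI with heintdef
      have hebaF : eba ∈ F := Finset.mem_filter.mpr ⟨hebaE, hebad, hebat, hebah⟩
      have heintF : eint ∈ F := headI_mem_of_mem hebaF
      have heintE : eint ∈ N.E := (Finset.mem_filter.mp heintF).1
      have heintd : N.dir eint = true := (Finset.mem_filter.mp heintF).2.1
      have heintt : N.tail eint = pb := (Finset.mem_filter.mp heintF).2.2.1
      have heinth : N.head eint = pa := (Finset.mem_filter.mp heintF).2.2.2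
      have hlpa : N.lbl pa = none := heaxt ▸ I.lleafT eax heaxE
      have hlpb : N.lbl pb = none := hebyt ▸ I.lleafT eby hebyE
      have hpbu : pb ≠ u := by
        intro h
        exact hyl (by rw [← hebyh, I.outU eby hebyE hebyd (hebyt.trans h)]; exact I.lv)
      have hpapb : pa ≠ pb :=
        fun h => I.noLoop eba hebaE ((hebat.trans h.symm).trans hebah.symm)
      have I1 : Inv ({ N with E := N.E.erase eint } : Net n) u v hi he :=
        I.eraseEdge (by rw [heintt]; exact hpbu)
      set N1 : Net n := { N with E := N.E.erase eint } with hN1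
      have hpbV1 : pb ∈ N1.V := hebyt ▸ I.wfT eby hebyE
      have hebyne : eby ≠ eint := by
        intro h
        exact hyl (by rw [← hebyh, h, heinth]; exact hlpa)
      have hez1 : ∃ ez ∈ N1.E, N1.dir ez = true ∧ N1.tail ez = pb ∧
          N1.lbl (N1.head ez) ≠ none := by
        refine ⟨eby, Finset.mem_erase.mpr ⟨hebyne, hebyE⟩, hebyd, hebyt, ?_⟩
        show N.lbl (N.head eby) ≠ none
        rw [hebyh]; exact hyl
      obtain ⟨I2, hl2, hV2, hE2, hE2'⟩ := I1.suppressIf hpbV1 hez1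
      have heaxne : eax ≠ eint := by
        intro h
        exact hxl (by rw [← heaxh, h, heinth]; exact hlpa)
      have heaxE1 : eax ∈ N1.E := Finset.mem_erase.mpr ⟨heaxne, heaxE⟩
      have hxpb : x ≠ pb := fun h => hxl (h ▸ hlpb)
      obtain ⟨heaxE2, ht2, hh2, hd2⟩ := hE2 eax heaxE1
        (by show N.tail eax ≠ pb; rw [heaxt]; exact hpapb)
        (by show N.head eax ≠ pb; rw [heaxh]; exact hxpb)
      have hpaV2 : pa ∈ (N1.suppressIf pb).V :=
        hV2 pa (heaxt ▸ I.wfT eax heaxE) hpapb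
      have hcard : 1 < (N.E.filter (fun e => N.dir e = true ∧ N.head e = pa)).card :=
        lt_of_lt_of_le one_lt_two hhyb
      obtain ⟨g, hgF, hgne⟩ := Finset.exists_mem_ne hcard eint
      obtain ⟨hgE, hgd, hgh⟩ := Finset.mem_filter.mp hgF
      have hgE1 : g ∈ N1.E := Finset.mem_erase.mpr ⟨hgne, hgE⟩
      obtain ⟨hgE2, hgd2, hgh2⟩ := hE2' g hgE1 hgd
        (by show N.head g ≠ pb; rw [hgh]; exact hpapb)
        (by show N.lbl (N.head g) = none; rw [hgh]; exact hlpa)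
      have hez2 : ∃ ez ∈ (N1.suppressIf pb).E, (N1.suppressIf pb).dir ez = true ∧
          (N1.suppressIf pb).tail ez = pa ∧
          (N1.suppressIf pb).lbl ((N1.suppressIf pb).head ez) ≠ none := by
        refine ⟨eax, heaxE2, by rw [hd2]; exact heaxd, by rw [ht2]; exact heaxt, ?_⟩
        rw [hh2, hl2]
        show N.lbl (N.head eax) ≠ none
        rw [heaxh]; exact hxl
      have hin2 : (N1.suppressIf pb).indeg pa ≠ 0 ∨ (N1.suppressIf pb).undeg pa ≠ 0 ∨
          (N1.suppressIf pb).deg pa ≠ 2 :=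
        Or.inl (indeg_ne_zero hgE2 hgd2 (by rw [hgh2]; exact hgh))
      exact (I2.suppress hpaV2 hez2 hin2).1
    · unfold Net.reduceCherry
      rw [if_neg hT, if_neg hR]
      exact I

theorem Inv.run {u v hi he : ℕ} : ∀ (S : List (Fin n × Fin n)) (N : Net n),
    Inv N u v hi he → Inv (N.reduceSeq S) u v hi he
  | [], _, I => I
  | s :: S, N, I => Inv.run S (N.reduceCherry s.1 s.2) (I.step s.1 s.2)

end StmtNine

/-- Prop. 4, part 2: if an orchard `L`-network has parallel edges
`h_i`, `h_e` with common tail `u`, then `u` lies in an unresolved root component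
`T`, and `h_i, h_e ∈ adm(T)`. -/
theorem stmt9 {n : ℕ} (N : Net n) (hN : N.Good) (hO : N.Orchard)
    (hi he u v : ℕ) (hne : hi ≠ he) (hiE : hi ∈ N.E) (heE : he ∈ N.E)
    (hti : N.tail hi = u) (hhi : N.head hi = v)
    (hte : N.tail he = u) (hhe : N.head he = v) :
    N.UnresolvedRC u ∧ N.AdmFor u hi ∧ N.AdmFor u he := by
  obtain ⟨hL, hB, hC⟩ := hN
  have uV : u ∈ N.V := hti ▸ hL.wfT hi hiE
  have vV : v ∈ N.V := hhi ▸ hL.wfH hi hiE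
  have noLoop : ∀ e ∈ N.E, N.tail e ≠ N.head e := by
    intro e heE h
    apply hL.acyclic [(e, true)]
    refine ⟨N.tail e, by simp, ⟨⟨heE, fun _ => rfl, ?_⟩, ?_⟩, by simp, by simp⟩
    · show N.src (e, true) = N.tail e
      simp [Net.src]
    · show N.dst (e, true) = N.tail e
      simp [Net.dst]
      exact h.symm
  have uvne : u ≠ v := by
    have h := noLoop hi hiE
    rw [hti, hhi] at h
    exact h
  have dhe : N.dir he = true := by
    by_contra hd
    have hd' : N.dir he = false := by simpa using hd
    apply hL.acyclic [(hi, true), (he, false)]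
    refine ⟨u, by simp, ⟨⟨hiE, fun _ => rfl, ?_⟩, ⟨heE, fun hh => ?_, ?_⟩, ?_⟩, ?_, ?_⟩
    · show N.src (hi, true) = u
      simp [Net.src, hti]
    · rw [hd'] at hh; exact absurd hh (by simp)
    · show N.src (he, false) = N.dst (hi, true)
      simp [Net.src, Net.dst, hhe, hhi]
    · show N.dst (he, false) = u
      simp [Net.dst, hte]
    · show (([(hi, true), (he, false)]).map N.dst).Nodup
      simp [Net.dst, hhi, hte]
      exact fun hh => uvne hh.symm
    · show (([(hi, true), (he, false)]).map Prod.fst).Nodup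
      simp
      exact hne
  have dhi : N.dir hi = true := by
    by_contra hd
    have hd' : N.dir hi = false := by simpa using hd
    apply hL.acyclic [(he, true), (hi, false)]
    refine ⟨u, by simp, ⟨⟨heE, fun _ => rfl, ?_⟩, ⟨hiE, fun hh => ?_, ?_⟩, ?_⟩, ?_, ?_⟩
    · show N.src (he, true) = u
      simp [Net.src, hte]
    · rw [hd'] at hh; exact absurd hh (by simp)
    · show N.src (hi, false) = N.dst (he, true)
      simp [Net.src, Net.dst, hhi, hhe]
    · show N.dst (hi, false) = u
      simp [Net.dst, hti]
    · show (([(he, true), (hi, false)]).map N.dst).Nodup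
      simp [Net.dst, hhe, hti]
      exact fun hh => uvne hh.symm
    · show (([(he, true), (hi, false)]).map Prod.fst).Nodup
      simp
      exact fun hh => hne hh.symm
  have hadm : N.AdmFor u hi ∧ N.AdmFor u he :=
    ⟨⟨hiE, by rw [hti]; exact Relation.ReflTransGen.refl⟩,
     ⟨heE, by rw [hte]; exact Relation.ReflTransGen.refl⟩⟩
  by_cases hTriv : N.TrivialClass u
  swap
  · exact ⟨⟨⟨uV, fun e heE' hd hconn => hC.2 u uV hTriv e heE' hd hconn⟩,
      Or.inl hTriv⟩, hadm⟩
  · have hustep_sym : Symmetric N.ustep := by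
      rintro z w ⟨e, heE', hd, hor⟩
      exact ⟨e, heE', hd, hor.symm⟩
    have hundeg_u : N.undeg u = 0 := by
      rw [Net.undeg, Finset.card_eq_zero, Finset.filter_eq_empty_iff]
      rintro e heE' ⟨hd, hor⟩
      rcases hor with h | h
      · have hz := hTriv (N.head e)
          (Relation.ReflTransGen.single ⟨e, heE', hd, Or.inl ⟨h, rfl⟩⟩)
        exact noLoop e heE' (h.trans hz.symm)
      · have hz := hTriv (N.tail e)
          (Relation.ReflTransGen.single ⟨e, heE', hd, Or.inr ⟨rfl, h⟩⟩)
        exact noLoop e heE' (hz.trans h.symm)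
    have hsub : ({hi, he} : Finset ℕ) ⊆
        N.E.filter (fun e => N.dir e = true ∧ N.tail e = u) := by
      intro z hz
      rcases Finset.mem_insert.mp hz with rfl | hz'
      · exact Finset.mem_filter.mpr ⟨hiE, dhi, hti⟩
      · rw [Finset.mem_singleton] at hz'
        subst hz'
        exact Finset.mem_filter.mpr ⟨heE, dhe, hte⟩
    have hout2 : 2 ≤ N.outdeg u := by
      rw [Net.outdeg, ← Finset.card_pair hne]
      exact Finset.card_le_card hsub
    have hunl : ¬ N.IsLeafNode u := by
      intro h
      rw [h.2.1] at hout2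
      omega
    have hvsub : ({hi, he} : Finset ℕ) ⊆
        N.E.filter (fun e => N.dir e = true ∧ N.head e = v) := by
      intro z hz
      rcases Finset.mem_insert.mp hz with rfl | hz'
      · exact Finset.mem_filter.mpr ⟨hiE, dhi, hhi⟩
      · rw [Finset.mem_singleton] at hz'
        subst hz'
        exact Finset.mem_filter.mpr ⟨heE, dhe, hhe⟩
    have hvin2 : 2 ≤ N.indeg v := by
      rw [Net.indeg, ← Finset.card_pair hne]
      exact Finset.card_le_card hvsub
    have hvleaf : ¬ N.IsLeafNode v := by
      intro h
      have h2 : N.IsTreeNode v := hL.leavesTree v h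
      rw [Net.IsTreeNode] at h2
      omega
    have hvroot : ¬ N.IsRootNode v := by
      intro h
      rw [h.2.1] at hvin2
      omega
    have hvdeg : N.deg v = 3 := (hB v vV).2.2 hvroot hvleaf
    rw [Net.deg] at hvdeg
    have hvin2' : N.indeg v = 2 := by
      by_contra hcon
      have h3 : N.indeg v = 3 := by omega
      exact hvleaf ⟨vV, by omega, by omega⟩
    have hinV : ∀ e ∈ N.E, N.dir e = true → N.head e = v → N.tail e = u := by
      have hfil : ({hi, he} : Finset ℕ) =
          N.E.filter (fun e => N.dir e = true ∧ N.head e = v) :=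
        Finset.eq_of_subset_of_card_le hvsub
          (by rw [Finset.card_pair hne]; exact le_of_eq hvin2')
      intro e heE' hd hh
      have : e ∈ ({hi, he} : Finset ℕ) := hfil ▸ Finset.mem_filter.mpr ⟨heE', hd, hh⟩
      rcases Finset.mem_insert.mp this with rfl | h'
      · exact hti
      · rw [Finset.mem_singleton] at h'
        subst h'
        exact hte
    have hundeg_v : N.undeg v = 0 := by
      by_contra h
      rw [Net.undeg] at h
      obtain ⟨e, hef⟩ := Finset.card_pos.mp (Nat.pos_of_ne_zero h)
      obtain ⟨heE', hd, hor⟩ := Finset.mem_filter.mp hef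
      have hnt : ¬ N.TrivialClass v := by
        intro htv
        rcases hor with hh | hh
        · exact noLoop e heE'
            (hh.trans (htv (N.head e)
              (Relation.ReflTransGen.single ⟨e, heE', hd, Or.inl ⟨hh, rfl⟩⟩)).symm)
        · exact noLoop e heE'
            ((htv (N.tail e)
              (Relation.ReflTransGen.single ⟨e, heE', hd, Or.inr ⟨rfl, hh⟩⟩)).trans hh.symm)
      exact hC.2 v vV hnt hi hiE dhi (by rw [hhi]; exact Relation.ReflTransGen.refl)
    have hnotleaf_none : ∀ z ∈ N.V, ¬ N.IsLeafNode z → N.lbl z = none := by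
      intro z hzV hzl
      apply Option.not_isSome_iff_eq_none.mp
      intro hs
      exact hzl ((hL.lblLeaf z hzV).mp hs)
    have lu : N.lbl u = none := hnotleaf_none u uV hunl
    have lv : N.lbl v = none := hnotleaf_none v vV hvleaf
    have hbad : (∀ e ∈ N.E, N.dir e = true → N.tail e = u → e = hi ∨ e = he) →
        False := by
      intro houtU'
      have houtU : ∀ e ∈ N.E, N.dir e = true → N.tail e = u → N.head e = v := by
        intro e heE' hd ht
        rcases houtU' e heE' hd ht with rfl | rfl
        · exact hhi
        · exact hhe
      have I : StmtNine.Inv N u v hi he :=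
        { hne := hne, hiE := hiE, heE := heE, dhi := dhi, dhe := dhe
          thi := hti, hhi := hhi, the := hte, hhe := hhe
          uv := uvne, lu := lu, lv := lv
          outU := houtU
          inV := hinV
          noUU := by
            intro e heE' hd
            refine ⟨?_, ?_, ?_, ?_⟩ <;> intro hh
            · exact absurd hundeg_u
                (Finset.card_ne_zero_of_mem (Finset.mem_filter.mpr
                  ⟨heE', hd, Or.inl hh⟩))
            · exact absurd hundeg_u
                (Finset.card_ne_zero_of_mem (Finset.mem_filter.mpr
                  ⟨heE', hd, Or.inr hh⟩))
            · exact absurd hundeg_v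
                (Finset.card_ne_zero_of_mem (Finset.mem_filter.mpr
                  ⟨heE', hd, Or.inl hh⟩))
            · exact absurd hundeg_v
                (Finset.card_ne_zero_of_mem (Finset.mem_filter.mpr
                  ⟨heE', hd, Or.inr hh⟩))
          inj := by
            intro z w' hz hzw
            have hzV : z ∈ N.V := by
              by_contra hc
              exact hz (hL.lblV z hc)
            have hwV : w' ∈ N.V := by
              by_contra hc
              rw [hL.lblV w' hc] at hzw
              exact hz hzw
            exact hL.lblInj z hzV w' hwV hz hzw
          lleafT := by
            intro e heE'
            apply hnotleaf_none _ (hL.wfT e heE')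
            intro hlf
            cases hdir : N.dir e with
            | true =>
              have hm : e ∈ N.E.filter
                  (fun e' => N.dir e' = true ∧ N.tail e' = N.tail e) :=
                Finset.mem_filter.mpr ⟨heE', hdir, rfl⟩
              exact absurd hlf.2.1 (Finset.card_ne_zero_of_mem hm)
            | false => exact (hC.1 e heE' hdir).1 hlf
          lleafU := by
            intro e heE' hd
            apply hnotleaf_none _ (hL.wfH e heE')
            exact (hC.1 e heE' hd).2
          lin1 := by
            intro z hz
            have hzV : z ∈ N.V := by
              by_contra hc
              exact hz (hL.lblV z hc)
            have hlf : N.IsLeafNode z :=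
              (hL.lblLeaf z hzV).mp (Option.ne_none_iff_isSome.mp hz)
            exact hL.leavesTree z hlf
          wfT := hL.wfT
          wfH := hL.wfH
          noLoop := noLoop }
      obtain ⟨S, L0, _, hTF⟩ := hO
      have IF := StmtNine.Inv.run S N I
      have hiE' := IF.hiE
      rw [hTF.1] at hiE'
      exact absurd hiE' (Finset.notMem_empty hi)
    have houtU_of : N.outdeg u = 2 →
        ∀ e ∈ N.E, N.dir e = true → N.tail e = u → e = hi ∨ e = he := by
      intro hout_eq
      have hfil : ({hi, he} : Finset ℕ) =
          N.E.filter (fun e => N.dir e = true ∧ N.tail e = u) :=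
        Finset.eq_of_subset_of_card_le hsub
          (by rw [Finset.card_pair hne]; exact le_of_eq hout_eq)
      intro e heE' hd ht
      have : e ∈ ({hi, he} : Finset ℕ) := hfil ▸ Finset.mem_filter.mpr ⟨heE', hd, ht⟩
      rcases Finset.mem_insert.mp this with rfl | h'
      · exact Or.inl rfl
      · rw [Finset.mem_singleton] at h'
        exact Or.inr h'
    by_cases h0 : N.indeg u = 0
    · have hroot : N.IsRootNode u := ⟨uV, h0, hundeg_u⟩
      have hdeg := (hB u uV).1 hroot
      rw [Net.deg, h0, hundeg_u] at hdeg
      rcases hdeg with h | h | h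
      · omega
      · exact (hbad (houtU_of (by omega))).elim
      · refine ⟨⟨⟨uV, fun e heE' hd hconn => ?_⟩, Or.inr (by rw [Net.deg, h0, hundeg_u]; omega)⟩, hadm⟩
        have hconn' : N.UndirConn u (N.head e) :=
          (by haveI : Std.Symm N.ustep := ⟨fun a b h => hustep_sym h⟩
              exact fun a b h => Std.Symm.symm a b h : Symmetric (Relation.ReflTransGen N.ustep)) hconn
        have hhu : N.head e = u := hTriv _ hconn'
        exact absurd h0 (Finset.card_ne_zero_of_mem
          (Finset.mem_filter.mpr ⟨heE', hd, hhu⟩))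
    · have hnroot : ¬ N.IsRootNode u := fun h => h0 h.2.1
      have hdeg3 : N.deg u = 3 := (hB u uV).2.2 hnroot hunl
      rw [Net.deg, hundeg_u] at hdeg3
      have h0' : N.indeg u ≠ 0 := h0
      exact (hbad (houtU_of (by omega))).elim

end
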